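/- arXiv:1109.3322 — 2 statements merged into one kernel-verified Lean document; each statement's English description precedes it below -/
import Mathlib

section
/- If some email exchange starting in a state s properly terminates, then every email exchange starting in s properly terminates. -/
/-- Messages: `send i l G` is a message with note `l` sent by `i` to group `G`;
`fwd i l m G` is the forward by `i` of message `m` with appended note `l`, sent to `G`. -/
inductive Msg (Agent Note : Type) where
  | send : Agent → Note → Finset Agent → Msg Agent Note
  | fwd  : Agent → Note → Msg Agent Note → Finset Agent → Msg Agent Note
  deriving DecidableEq

namespace Msg
variable {Agent Note : Type}

/-- The sender of a message. -/
def sender : Msg Agent Note → Agent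
  | send i _ _ => i
  | fwd i _ _ _ => i

/-- The group of regular recipients of a message. -/
def recip : Msg Agent Note → Finset Agent
  | send _ _ G => G
  | fwd _ _ _ G => G

/-- `S(m)`: the singleton set consisting of the sender. -/
def S (m : Msg Agent Note) : Finset Agent := {m.sender}

/-- Factual information `FI(m)` contained in a message. -/
def FI : Msg Agent Note → Set Note
  | send _ l _ => {l}
  | fwd _ l m _ => FI m ∪ {l}

/-- Wellformedness: all recipient groups are nonempty. -/
def WF : Msg Agent Note → Prop
  | send _ _ G => G.Nonempty
  | fwd _ _ m G => G.Nonempty ∧ m.WF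

/-- `PartOf m' m` : message `m'` is part of the message `m`. -/
inductive PartOf : Msg Agent Note → Msg Agent Note → Prop
  | base (i : Agent) (l : Note) (m : Msg Agent Note) (G : Finset Agent) :
      PartOf m (fwd i l m G)
  | step (i : Agent) (l : Note) (m m' : Msg Agent Note) (G : Finset Agent) :
      PartOf m' m → PartOf m' (fwd i l m G)

end Msg

/-- An email `m_B`: a message together with a set of BCC recipients. -/
structure Email (Agent Note : Type) where
  msg : Msg Agent Note
  bcc : Finset Agent
  deriving DecidableEq

namespace Email
variable {Agent Note : Type} [DecidableEq Agent]

/-- All agents involved in the email: the sender, regular recipients and BCC recipients. -/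
def agents (e : Email Agent Note) : Finset Agent := e.msg.S ∪ e.msg.recip ∪ e.bcc

/-- Wellformedness of an email: the message is wellformed and
`(S(m) ∪ R(m)) ∩ B = ∅`. -/
def WF (e : Email Agent Note) : Prop :=
  e.msg.WF ∧ (e.msg.S ∪ e.msg.recip) ∩ e.bcc = ∅

/-- Indistinguishability of emails for agent `i`. -/
def sim (i : Agent) (e e' : Email Agent Note) : Prop :=
  e.msg = e'.msg ∧
    ((i ∈ e.msg.S ∧ e.bcc = e'.bcc) ∨ i ∈ e.msg.recip \ e.msg.S ∨ i ∈ e.bcc ∩ e'.bcc)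

/-- The email `e` is shared by the group `A`. -/
def SharedBy (A : Finset Agent) (e : Email Agent Note) : Prop :=
  A ⊆ e.msg.S ∪ e.msg.recip ∨ ∃ j ∈ e.bcc, A ⊆ e.msg.S ∪ {j}

end Email

/-- A state: a finite set of emails together with the initial notes of each agent. -/
structure EState (Agent Note : Type) where
  emails : Finset (Email Agent Note)
  notes : Agent → Set Note

namespace EState
variable {Agent Note : Type} [DecidableEq Agent]

/-- The basic requirements on a state: all its emails are wellformed and
it contains at most one email per message. -/
def WF (s : EState Agent Note) : Prop :=
  (∀ e ∈ s.emails, e.WF) ∧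
  ∀ e ∈ s.emails, ∀ e' ∈ s.emails, e.msg = e'.msg → e = e'

/-- Legality of a state: there is a strict partial order on its emails
satisfying conditions L1, L2, L3. -/
def Legal (s : EState Agent Note) : Prop :=
  s.WF ∧
  ∃ r : Email Agent Note → Email Agent Note → Prop,
    (∀ e ∈ s.emails, ¬ r e e) ∧
    (∀ e ∈ s.emails, ∀ e' ∈ s.emails, ∀ e'' ∈ s.emails, r e e' → r e' e'' → r e e'') ∧
    -- L1
    (∀ e ∈ s.emails, ∀ (i : Agent) (l : Note) (m : Msg Agent Note) (G : Finset Agent),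
      e.msg = Msg.fwd i l m G →
      ∃ e' ∈ s.emails, e'.msg = m ∧ r e' e ∧ i ∈ m.S ∪ m.recip ∪ e'.bcc) ∧
    -- L2
    (∀ e ∈ s.emails, ∀ (i : Agent) (l : Note) (G : Finset Agent),
      e.msg = Msg.send i l G → l ∉ s.notes i →
      ∃ e' ∈ s.emails, r e' e ∧ i ∈ e'.msg.recip ∪ e'.bcc ∧ l ∈ e'.msg.FI) ∧
    -- L3
    (∀ e ∈ s.emails, ∀ (i : Agent) (l : Note) (m : Msg Agent Note) (G : Finset Agent),
      e.msg = Msg.fwd i l m G → l ∉ s.notes i →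
      ∃ e' ∈ s.emails, r e' e ∧ i ∈ e'.msg.recip ∪ e'.bcc ∧ l ∈ e'.msg.FI)

/-- Indistinguishability of states for agent `i`. -/
def sim (i : Agent) (s s' : EState Agent Note) : Prop :=
  s.notes i = s'.notes i ∧
  (∀ e ∈ s.emails, i ∈ e.agents → ∃ e' ∈ s'.emails, e.sim i e') ∧
  (∀ e' ∈ s'.emails, i ∈ e'.agents → ∃ e ∈ s.emails, e.sim i e')

/-- `~_A`: the reflexive transitive closure of the union of the relations `~_i`, `i ∈ A`. -/
def simG (G : Finset Agent) : EState Agent Note → EState Agent Note → Prop :=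
  Relation.ReflTransGen (fun t t' => ∃ i ∈ G, t.sim i t')

end EState

/-- Formulas of the epistemic language (with a trivially true formula `tt`
used to form finite conjunctions). -/
inductive Form (Agent Note : Type) where
  | tt   : Form Agent Note
  | msg  : Msg Agent Note → Form Agent Note
  | recv : Agent → Msg Agent Note → Form Agent Note
  | neg  : Form Agent Note → Form Agent Note
  | and  : Form Agent Note → Form Agent Note → Form Agent Note
  | ck   : Finset Agent → Form Agent Note → Form Agent Note

namespace Form
variable {Agent Note : Type}

def imp (φ ψ : Form Agent Note) : Form Agent Note := neg (and φ (neg ψ))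

def iff (φ ψ : Form Agent Note) : Form Agent Note := and (imp φ ψ) (imp ψ φ)

def bigAnd : List (Form Agent Note) → Form Agent Note
  | [] => tt
  | φ :: l => and φ (bigAnd l)

end Form

/-- Truth of a formula in a state. -/
def Sat {Agent Note : Type} [DecidableEq Agent] :
    EState Agent Note → Form Agent Note → Prop
  | _, .tt => True
  | s, .msg m => ∃ B, (⟨m, B⟩ : Email Agent Note) ∈ s.emails
  | s, .recv i m => ∃ B, (⟨m, B⟩ : Email Agent Note) ∈ s.emails ∧ i ∈ m.S ∪ m.recip ∪ B
  | s, .neg φ => ¬ Sat s φ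
  | s, .and φ ψ => Sat s φ ∧ Sat s ψ
  | s, .ck G φ => ∀ s', EState.Legal s' → EState.simG G s s' → Sat s' φ

/-- Validity: truth in all legal states. -/
def Valid {Agent Note : Type} [DecidableEq Agent] (φ : Form Agent Note) : Prop :=
  ∀ s : EState Agent Note, s.Legal → Sat s φ

/-- The formula `m_B` expressing that the message `m` was sent with exactly `B`
as the set of BCC recipients. -/
noncomputable def Email.form {Agent Note : Type} [DecidableEq Agent] [Fintype Agent]
    (e : Email Agent Note) : Form Agent Note :=
  .and (.msg e.msg)
    (.and (Form.bigAnd (e.agents.toList.map fun i => .recv i e.msg))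
      (Form.bigAnd ((e.agentsᶜ : Finset Agent).toList.map fun i => .neg (.recv i e.msg))))

/-- The epistemic information `EI(m)` contained in a message. -/
def Msg.EIF {Agent Note : Type} [DecidableEq Agent] : Msg Agent Note → Form Agent Note
  | .send i l G => .ck ({i} ∪ G) (.msg (.send i l G))
  | .fwd i l m G => .ck ({i} ∪ G) (.and (.msg (.fwd i l m G)) (EIF m))

/-- The epistemic information `EI(m_B)` contained in an email. -/
noncomputable def Email.EIF {Agent Note : Type} [DecidableEq Agent] [Fintype Agent]
    (e : Email Agent Note) : Form Agent Note :=
  .and e.msg.EIF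
    (.and (Form.bigAnd (e.bcc.toList.map fun i =>
        .ck (e.msg.S ∪ {i}) (.and e.msg.EIF (.recv i e.msg))))
      (.ck e.msg.S e.form))

/-- The information gain `IG(m_B, i)` of an agent from an email. -/
noncomputable def Email.IG {Agent Note : Type} [DecidableEq Agent] [Fintype Agent]
    (e : Email Agent Note) (i : Agent) : Form Agent Note :=
  if e.msg.sender = i then e.EIF
  else if i ∈ e.msg.recip then e.msg.EIF
  else .ck (e.msg.S ∪ {i}) (.and e.msg.EIF (.recv i e.msg))

/-- The strict partial order `<` on emails: `e < e'` iff the messages differ and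
`m' → m` is valid. -/
def emailLt {Agent Note : Type} [DecidableEq Agent] (e e' : Email Agent Note) : Prop :=
  e.msg ≠ e'.msg ∧ Valid (Form.imp (.msg e'.msg) (.msg e.msg))

/-- `E_A`: the set of emails of `E` shared by the group `A`. -/
noncomputable def sharedSet {Agent Note : Type} [DecidableEq Agent]
    (E : Finset (Email Agent Note)) (A : Finset Agent) : Finset (Email Agent Note) :=
  @Finset.filter _ (fun e => e.SharedBy A) (fun _ => Classical.propDecidable _) E

/-- The downward closure `E'_≤` of `E' ⊆ E` w.r.t. the order `<`. -/
noncomputable def downClosure {Agent Note : Type} [DecidableEq Agent] [DecidableEq Note]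
    (E E' : Finset (Email Agent Note)) : Finset (Email Agent Note) :=
  E' ∪ @Finset.filter _ (fun e => ∃ e' ∈ E', emailLt e e')
    (fun _ => Classical.propDecidable _) E

/-- The state `s \ m_B`: removing the email from the state while augmenting the
initial notes of its recipients with the factual information of its message. -/
def EState.remove {Agent Note : Type} [DecidableEq Agent] [DecidableEq Note]
    (s : EState Agent Note) (e : Email Agent Note) : EState Agent Note :=
  ⟨s.emails.erase e,
   fun i => if i ∈ e.msg.recip ∪ e.bcc then s.notes i ∪ e.msg.FI else s.notes i⟩

/-- The state `s[m_{B ↦ C}]`: shrinking the BCC set of the email `e = m_B` to `C`,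
augmenting the initial notes of the agents in `B \ C`. -/
def EState.shrink {Agent Note : Type} [DecidableEq Agent] [DecidableEq Note]
    (s : EState Agent Note) (e : Email Agent Note) (C : Finset Agent) : EState Agent Note :=
  ⟨insert ⟨e.msg, C⟩ (s.emails.erase e),
   fun i => if i ∈ e.bcc \ C then s.notes i ∪ e.msg.FI else s.notes i⟩

/-- A mailbox assigns to every agent a set of messages. -/
abbrev Mailbox (Agent Note : Type) := Agent → Set (Msg Agent Note)

/-- A configuration: a state together with a mailbox. -/
abbrev Config (Agent Note : Type) := EState Agent Note × Mailbox Agent Note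

/-- The conditions under which an email with the given message can be processed. -/
def CanProcess {Agent Note : Type} (L : Agent → Set Note) (σ : Mailbox Agent Note) :
    Msg Agent Note → Prop
  | .send i l _ => l ∈ L i ∨ ∃ m' ∈ σ i, l ∈ Msg.FI m'
  | .fwd i l m' _ => m' ∈ σ i ∧ (l ∈ L i ∨ ∃ m'' ∈ σ i, l ∈ Msg.FI m'')

/-- Delivery of an email: the message is added to the mailboxes of the sender,
the regular recipients and the BCC recipients. -/
def deliver {Agent Note : Type} [DecidableEq Agent] (σ : Mailbox Agent Note)
    (e : Email Agent Note) : Mailbox Agent Note :=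
  fun j => if j ∈ e.agents then σ j ∪ {e.msg} else σ j

/-- An atomic transition between configurations, processing one email. -/
def Step {Agent Note : Type} [DecidableEq Agent] [DecidableEq Note]
    (c c' : Config Agent Note) : Prop :=
  ∃ e ∈ c.1.emails, CanProcess c.1.notes c.2 e.msg ∧
    c'.1 = ⟨c.1.emails.erase e, c.1.notes⟩ ∧ c'.2 = deliver c.2 e

/-- The initial configuration: the state together with the empty mailbox. -/
def startConfig {Agent Note : Type} (s : EState Agent Note) : Config Agent Note :=
  (s, fun _ => ∅)

/-- An email exchange starting in `s`: a maximal sequence of atomic transitions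
starting in the configuration `⟨s, σ₀⟩`. -/
def IsExchange {Agent Note : Type} [DecidableEq Agent] [DecidableEq Note]
    (s : EState Agent Note) (cs : List (Config Agent Note)) : Prop :=
  List.Chain Step (startConfig s) cs ∧
  ∀ c', ¬ Step ((startConfig s :: cs).getLast (List.cons_ne_nil _ _)) c'

/-- An email exchange properly terminates if its last configuration has an
empty set of emails. -/
def ProperlyTerminates {Agent Note : Type} [DecidableEq Agent] [DecidableEq Note]
    (s : EState Agent Note) (cs : List (Config Agent Note)) : Prop :=
  ((startConfig s :: cs).getLast (List.cons_ne_nil _ _)).1.emails = ∅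

section AuxTermination
variable {Agent Note : Type} [DecidableEq Agent] [DecidableEq Note]

/-- Invariant along a run from `startConfig s`: notes are unchanged, remaining emails form a
subset of the initial ones, and the mailbox is determined by the set of processed emails. -/
def ExchInv (s : EState Agent Note) (c : Config Agent Note) : Prop :=
  c.1.notes = s.notes ∧ c.1.emails ⊆ s.emails ∧
  ∀ j, c.2 j = {m | ∃ e ∈ s.emails, e ∉ c.1.emails ∧ j ∈ e.agents ∧ m = e.msg}

lemma exchInv_start (s : EState Agent Note) : ExchInv s (startConfig s) := by
  refine ⟨rfl, Finset.Subset.refl _, fun j => ?_⟩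
  ext m
  simp only [startConfig, Set.mem_setOf_eq, Set.mem_empty_iff_false, false_iff]
  rintro ⟨e, he, hne, -⟩
  exact hne he

lemma exchInv_step {s : EState Agent Note} {c c' : Config Agent Note}
    (hI : ExchInv s c) (h : Step c c') : ExchInv s c' := by
  obtain ⟨hnotes, hsub, hσ⟩ := hI
  obtain ⟨e, he, -, h1, h2⟩ := h
  refine ⟨by rw [h1]; exact hnotes, by rw [h1]; exact (Finset.erase_subset _ _).trans hsub,
    fun j => ?_⟩
  rw [h2]
  have hes : e ∈ s.emails := hsub he
  ext m
  simp only [deliver, hσ j, h1]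
  by_cases hj : j ∈ e.agents
  · simp only [hj, if_pos, Set.mem_union, Set.mem_setOf_eq, Set.mem_singleton_iff]
    constructor
    · rintro (⟨e', he', hne, hje, rfl⟩ | rfl)
      · exact ⟨e', he', fun hc => hne (Finset.mem_of_mem_erase hc), hje, rfl⟩
      · exact ⟨e, hes, fun hc => (Finset.notMem_erase e _) hc, hj, rfl⟩
    · rintro ⟨e', he', hne, hje, rfl⟩
      by_cases hee : e' = e
      · exact Or.inr (by rw [hee])
      · exact Or.inl ⟨e', he', fun hc => hne (Finset.mem_erase.mpr ⟨hee, hc⟩), hje, rfl⟩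
  · simp only [hj, if_neg, not_false_iff, Set.mem_setOf_eq]
    constructor
    · rintro ⟨e', he', hne, hje, rfl⟩
      refine ⟨e', he', fun hc => hne (Finset.mem_of_mem_erase hc), hje, rfl⟩
    · rintro ⟨e', he', hne, hje, rfl⟩
      by_cases hee : e' = e
      · exact absurd (hee ▸ hje) hj
      · exact ⟨e', he', fun hc => hne (Finset.mem_erase.mpr ⟨hee, hc⟩), hje, rfl⟩

lemma canProcess_mono {L : Agent → Set Note} {σ σ' : Mailbox Agent Note}
    (h : ∀ j, σ j ⊆ σ' j) {m : Msg Agent Note} (hm : CanProcess L σ m) :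
    CanProcess L σ' m := by
  cases m with
  | send i l G =>
      rcases hm with hl | ⟨m', hm', hl⟩
      · exact Or.inl hl
      · exact Or.inr ⟨m', h i hm', hl⟩
  | fwd i l m' G =>
      obtain ⟨hm', hrest⟩ := hm
      refine ⟨h i hm', ?_⟩
      rcases hrest with hl | ⟨m'', hm'', hl⟩
      · exact Or.inl hl
      · exact Or.inr ⟨m'', h i hm'', hl⟩

lemma exchInv_last {s : EState Agent Note} :
    ∀ (d0 : Config Agent Note) (ds : List (Config Agent Note)),
    List.Chain Step d0 ds → ExchInv s d0 →
    ExchInv s ((d0 :: ds).getLast (List.cons_ne_nil _ _)) := by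
  intro d0 ds
  induction ds generalizing d0 with
  | nil => intro _ h; simpa using h
  | cons d1 ds ih =>
      intro hchain hI
      simp only [List.Chain, List.isChain_cons_cons] at hchain
      have := ih d1 hchain.2 (exchInv_step hI hchain.1)
      simpa [List.getLast_cons] using this

lemma exch_find {s : EState Agent Note} {E' : Finset (Email Agent Note)} :
    ∀ (d0 : Config Agent Note) (ds : List (Config Agent Note)),
    List.Chain Step d0 ds → ExchInv s d0 → E' ⊆ d0.1.emails →
    ¬ E' ⊆ ((d0 :: ds).getLast (List.cons_ne_nil _ _)).1.emails →
    ∃ d : Config Agent Note, ExchInv s d ∧ E' ⊆ d.1.emails ∧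
      ∃ e ∈ E', CanProcess d.1.notes d.2 e.msg := by
  intro d0 ds
  induction ds generalizing d0 with
  | nil =>
      intro _ _ hsub hlast
      exact absurd (by simpa using hsub) hlast
  | cons d1 ds ih =>
      intro hchain hI hsub hlast
      simp only [List.Chain, List.isChain_cons_cons] at hchain
      obtain ⟨hstep, hchain'⟩ := hchain
      obtain ⟨e, he, hcan, h1, h2⟩ := hstep
      by_cases heE : e ∈ E'
      · exact ⟨d0, hI, hsub, e, heE, hcan⟩
      · have hsub1 : E' ⊆ d1.1.emails := by
          intro x hx
          rw [h1]
          exact Finset.mem_erase.mpr ⟨fun hc => heE (hc ▸ hx), hsub hx⟩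
        have hI1 := exchInv_step hI ⟨e, he, hcan, h1, h2⟩
        have hlast' : ¬ E' ⊆ ((d1 :: ds).getLast (List.cons_ne_nil _ _)).1.emails := by
          simpa [List.getLast_cons] using hlast
        exact ih d1 hchain' hI1 hsub1 hlast'

end AuxTermination

/-- if some email exchange starting in `s` properly terminates, then
every email exchange starting in `s` properly terminates. -/
theorem terminating_exchange_all {Agent Note : Type} [DecidableEq Agent] [Fintype Agent]
    [Nonempty Agent] [DecidableEq Note] (s : EState Agent Note) (hwf : s.WF)
    (h : ∃ cs : List (Config Agent Note), IsExchange s cs ∧ ProperlyTerminates s cs) :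
    ∀ cs : List (Config Agent Note), IsExchange s cs → ProperlyTerminates s cs := by
  obtain ⟨cs₀, ⟨hchain₀, _⟩, hterm₀⟩ := h
  intro cs ⟨hchain, hmax⟩
  -- the last configuration of the given exchange
  set c := (startConfig s :: cs).getLast (List.cons_ne_nil _ _) with hc
  have hIc : ExchInv s c := exchInv_last _ cs hchain (exchInv_start s)
  by_contra hne
  have hEne : c.1.emails ≠ ∅ := hne
  -- E' := remaining emails of the stuck configuration
  set E' := c.1.emails with hE'
  have hsub0 : E' ⊆ (startConfig s).1.emails := hIc.2.1
  have hlast0 : ¬ E' ⊆ ((startConfig s :: cs₀).getLast (List.cons_ne_nil _ _)).1.emails := by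
    rw [hterm₀]
    intro hs
    exact hEne (Finset.subset_empty.mp hs)
  obtain ⟨d, hId, hsubd, e, heE', hcan⟩ :=
    exch_find (startConfig s) cs₀ hchain₀ (exchInv_start s) hsub0 hlast0
  -- the mailbox of d is contained in the mailbox of c
  have hσ : ∀ j, d.2 j ⊆ c.2 j := by
    intro j m hm
    rw [hId.2.2 j] at hm
    rw [hIc.2.2 j]
    obtain ⟨e', he', hne', hje, rfl⟩ := hm
    exact ⟨e', he', fun hc' => hne' (hsubd hc'), hje, rfl⟩
  have hnotes : d.1.notes = c.1.notes := by rw [hId.1, hIc.1]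
  have hcan' : CanProcess c.1.notes c.2 e.msg := canProcess_mono hσ (hnotes ▸ hcan)
  exact hmax (⟨c.1.emails.erase e, c.1.notes⟩, deliver c.2 e)
    ⟨e, heE', hcan', rfl, rfl⟩
end

section
/- If some email exchange starting in a state s properly terminates, then s is a legal state. -/
section Aux

variable {Agent Note : Type} [DecidableEq Agent] [DecidableEq Note]

omit [DecidableEq Note] in
/-- Membership in a mailbox after delivering a list of emails. -/
lemma mem_foldl_deliver (l : List (Email Agent Note)) (σ : Mailbox Agent Note)
    (i : Agent) (m : Msg Agent Note) :
    m ∈ (l.foldl deliver σ) i ↔ m ∈ σ i ∨ ∃ e ∈ l, e.msg = m ∧ i ∈ e.agents := by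
  induction l generalizing σ with
  | nil => simp
  | cons e t ih =>
    rw [List.foldl_cons, ih]
    unfold deliver
    by_cases hi : i ∈ e.agents
    · simp only [hi, if_pos]
      constructor
      · rintro (h | h)
        · rcases h with h | h
          · exact Or.inl h
          · exact Or.inr ⟨e, by simp, h.symm, hi⟩
        · rcases h with ⟨e', he', hm, hie⟩
          exact Or.inr ⟨e', List.mem_cons_of_mem _ he', hm, hie⟩
      · rintro (h | ⟨e', he', hm, hie⟩)
        · exact Or.inl (Or.inl h)
        · rcases List.mem_cons.mp he' with rfl | he'
          · exact Or.inl (Or.inr hm.symm)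
          · exact Or.inr ⟨e', he', hm, hie⟩
    · simp only [hi, if_neg]
      constructor
      · rintro (h | ⟨e', he', hm, hie⟩)
        · exact Or.inl h
        · exact Or.inr ⟨e', List.mem_cons_of_mem _ he', hm, hie⟩
      · rintro (h | ⟨e', he', hm, hie⟩)
        · exact Or.inl h
        · rcases List.mem_cons.mp he' with rfl | he'
          · exact absurd hie hi
          · exact Or.inr ⟨e', he', hm, hie⟩

/-- From a properly terminating chain we extract the processing order of the emails. -/
lemma extract_order : ∀ (cs : List (Config Agent Note)) (c : Config Agent Note),
    List.Chain Step c cs → ((c :: cs).getLast (List.cons_ne_nil _ _)).1.emails = ∅ →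
    ∃ es : List (Email Agent Note), es.Nodup ∧ (∀ e, e ∈ es ↔ e ∈ c.1.emails) ∧
      ∀ k (hk : k < es.length),
        CanProcess c.1.notes ((es.take k).foldl deliver c.2) (es[k]'hk).msg := by
  intro cs
  induction cs with
  | nil =>
    intro c _ hlast
    refine ⟨[], List.nodup_nil, ?_, by intro k hk; simp at hk⟩
    intro e
    simp only [List.getLast_singleton] at hlast
    simp [hlast]
  | cons c' cs' ih =>
    intro c hchain hlast
    rcases List.chain_cons.mp hchain with ⟨hstep, hchain'⟩
    have hlast' : ((c' :: cs').getLast (List.cons_ne_nil _ _)).1.emails = ∅ := by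
      rwa [List.getLast_cons (List.cons_ne_nil _ _)] at hlast
    rcases ih c' hchain' hlast' with ⟨es', hnd', hmem', hcp'⟩
    rcases hstep with ⟨e, he, hcp, h1, h2⟩
    refine ⟨e :: es', ?_, ?_, ?_⟩
    · refine List.nodup_cons.mpr ⟨?_, hnd'⟩
      intro hin
      have : e ∈ c'.1.emails := (hmem' e).mp hin
      rw [h1] at this
      exact (Finset.mem_erase.mp this).1 rfl
    · intro e''
      constructor
      · intro hin
        rcases List.mem_cons.mp hin with rfl | hin
        · exact he
        · have : e'' ∈ c'.1.emails := (hmem' e'').mp hin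
          rw [h1] at this
          exact Finset.mem_of_mem_erase this
      · intro hin
        by_cases heq : e'' = e
        · exact heq ▸ (List.mem_cons_self : e ∈ e :: es')
        · refine List.mem_cons_of_mem _ ((hmem' e'').mpr ?_)
          rw [h1]
          exact Finset.mem_erase.mpr ⟨heq, hin⟩
    · intro k hk
      match k with
      | 0 => simpa using hcp
      | Nat.succ k =>
        have hk' : k < es'.length := by simpa using hk
        have := hcp' k hk'
        have hnotes : c'.1.notes = c.1.notes := by rw [h1]
        rw [hnotes, h2] at this
        simpa [List.take_succ_cons] using this

end Aux

/-- if some email exchange starting in `s` properly terminates, then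
`s` is a legal state. -/
theorem terminating_exchange_implies_legal {Agent Note : Type} [DecidableEq Agent]
    [Fintype Agent] [Nonempty Agent] [DecidableEq Note] (s : EState Agent Note)
    (hwf : s.WF)
    (h : ∃ cs : List (Config Agent Note), IsExchange s cs ∧ ProperlyTerminates s cs) :
    s.Legal :=  by
  classical
  rcases h with ⟨cs, ⟨hchain, _⟩, hterm⟩
  rcases extract_order cs (startConfig s) hchain hterm with ⟨es, hnd, hmem, hcp⟩
  simp only [startConfig] at hcp hmem
  -- mailbox membership gives an earlier email in the list
  have hmail : ∀ (k : ℕ) (i : Agent) (m : Msg Agent Note),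
      m ∈ ((es.take k).foldl deliver (fun _ => ∅)) i →
      ∃ j, ∃ hj : j < es.length, j < k ∧ (es[j]'hj).msg = m ∧ i ∈ (es[j]'hj).agents := by
    intro k i m hm
    rcases (mem_foldl_deliver _ _ _ _).mp hm with h | ⟨e, he, hem, hie⟩
    · exact absurd h (by simp)
    · rcases List.mem_iff_getElem.mp he with ⟨j, hj, hje⟩
      have hjlen : j < es.length := lt_of_lt_of_le hj (by simp [List.length_take])
      have hjk : j < k := lt_of_lt_of_le hj (by simp [List.length_take])
      have : es[j]'hjlen = e := by rw [← List.getElem_take]; exact hje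
      exact ⟨j, hjlen, hjk, by rw [this]; exact hem, by rw [this]; exact hie⟩
  -- key lemma: tracing a note back to an email received by i
  have N : ∀ (k : ℕ) (i : Agent) (l : Note) (m : Msg Agent Note),
      m ∈ ((es.take k).foldl deliver (fun _ => ∅)) i → l ∈ m.FI → l ∉ s.notes i →
      ∃ j, ∃ hj : j < es.length, j < k ∧
        i ∈ (es[j]'hj).msg.recip ∪ (es[j]'hj).bcc ∧ l ∈ (es[j]'hj).msg.FI := by
    intro k
    induction k using Nat.strong_induction_on with
    | _ k ihk =>
    intro i l m hm hl hnl
    rcases hmail k i m hm with ⟨j, hj, hjk, hjm, hja⟩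
    by_cases hrb : i ∈ (es[j]'hj).msg.recip ∪ (es[j]'hj).bcc
    · exact ⟨j, hj, hjk, hrb, by rw [hjm]; exact hl⟩
    · -- i must be the sender of m
      have hiS : i ∈ (es[j]'hj).msg.S := by
        unfold Email.agents at hja
        rcases Finset.mem_union.mp hja with h | h
        · rcases Finset.mem_union.mp h with h | h
          · exact h
          · exact absurd (Finset.mem_union.mpr (Or.inl h)) hrb
        · exact absurd (Finset.mem_union.mpr (Or.inr h)) hrb
      rw [hjm] at hiS
      have hsend : m.sender = i := by
        unfold Msg.S at hiS
        exact (Finset.mem_singleton.mp hiS).symm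
      have hcpj := hcp j hj
      rw [hjm] at hcpj
      match m, hcpj with
      | Msg.send i' l' G, hcpj =>
        have hi' : i' = i := hsend
        subst hi'
        have hll' : l = l' := by simpa [Msg.FI] using hl
        subst hll'
        rcases hcpj with h | ⟨m', hm', hlm'⟩
        · exact absurd h hnl
        · rcases ihk j hjk i' l m' hm' hlm' hnl with ⟨j', hj', hjj', hres⟩
          exact ⟨j', hj', lt_trans hjj' hjk, hres⟩
      | Msg.fwd i' l' m'' G, hcpj =>
        have hi' : i' = i := hsend
        subst hi'
        rcases hcpj with ⟨hm'', hdisj⟩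
        have hor : l = l' ∨ l ∈ m''.FI := by
          have := hl
          simp [Msg.FI] at this
          tauto
        rcases hor with rfl | hlfi
        · rcases hdisj with h | ⟨m₂, hm₂, hlm₂⟩
          · exact absurd h hnl
          · rcases ihk j hjk i' l m₂ hm₂ hlm₂ hnl with ⟨j', hj', hjj', hres⟩
            exact ⟨j', hj', lt_trans hjj' hjk, hres⟩
        · rcases ihk j hjk i' l m'' hm'' hlfi hnl with ⟨j', hj', hjj', hres⟩
          exact ⟨j', hj', lt_trans hjj' hjk, hres⟩
  -- the order: processing index
  refine ⟨hwf, (fun e e' => ∃ j, ∃ j', ∃ hj : j < es.length, ∃ hj' : j' < es.length,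
    j < j' ∧ es[j]'hj = e ∧ es[j']'hj' = e'), ?_, ?_, ?_, ?_, ?_⟩
  · rintro e _ ⟨j, j', hj, hj', hlt, h1, h2⟩
    have : j = j' := (List.Nodup.getElem_inj_iff hnd).mp (h1.trans h2.symm)
    omega
  · rintro e _ e' _ e'' _ ⟨j1, j2, hj1, hj2, hlt1, ha1, ha2⟩ ⟨k1, k2, hk1, hk2, hlt2, hb1, hb2⟩
    have : j2 = k1 := (List.Nodup.getElem_inj_iff hnd).mp (ha2.trans hb1.symm)
    exact ⟨j1, k2, hj1, hk2, by omega, ha1, hb2⟩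
  · -- L1
    rintro e he i l m G hfwd
    rcases List.mem_iff_getElem.mp ((hmem e).mpr he) with ⟨k, hk, hke⟩
    have hcpk := hcp k hk
    rw [hke, hfwd] at hcpk
    rcases hcpk with ⟨hmσ, _⟩
    rcases hmail k i m hmσ with ⟨j, hj, hjk, hjm, hja⟩
    refine ⟨es[j]'hj, (hmem _).mp (List.getElem_mem _), hjm,
      ⟨j, k, hj, hk, hjk, rfl, hke⟩, ?_⟩
    unfold Email.agents at hja
    rwa [hjm] at hja
  · -- L2
    rintro e he i l G hsend hnl
    rcases List.mem_iff_getElem.mp ((hmem e).mpr he) with ⟨k, hk, hke⟩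
    have hcpk := hcp k hk
    rw [hke, hsend] at hcpk
    rcases hcpk with h | ⟨m', hm', hlm'⟩
    · exact absurd h hnl
    · rcases N k i l m' hm' hlm' hnl with ⟨j, hj, hjk, hres1, hres2⟩
      exact ⟨es[j]'hj, (hmem _).mp (List.getElem_mem _),
        ⟨j, k, hj, hk, hjk, rfl, hke⟩, hres1, hres2⟩
  · -- L3
    rintro e he i l m G hfwd hnl
    rcases List.mem_iff_getElem.mp ((hmem e).mpr he) with ⟨k, hk, hke⟩
    have hcpk := hcp k hk
    rw [hke, hfwd] at hcpk
    rcases hcpk with ⟨_, h | ⟨m', hm', hlm'⟩⟩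
    · exact absurd h hnl
    · rcases N k i l m' hm' hlm' hnl with ⟨j, hj, hjk, hres1, hres2⟩
      exact ⟨es[j]'hj, (hmem _).mp (List.getElem_mem _),
        ⟨j, k, hj, hk, hjk, rfl, hke⟩, hres1, hres2⟩
end
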